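/- Let K be a consistent belief set and let ⊙ be an operator on K satisfying, for all sentences α, β: weak relative success (α ∈ K⊙α or K⊙α ⊆ K), closure (K⊙α = Cn(K⊙α)), inclusion (K⊙α ⊆ K + α), consistency preservation (if K is consistent then K⊙α is consistent), vacuity (if ¬α ∉ K then K + α ⊆ K⊙α), extensionality (if ⊢ α ↔ β then K⊙α = K⊙β), strict improvement (if α ∈ K⊙α and ⊢ α → β then β ∈ K⊙β), N-persistence (if ¬β ∈ K⊙β then ¬β ∈ K⊙α for all α), N-recovery (K ⊆ (K⊙α) + ¬α), disjunctive overlap (K⊙α ∩ K⊙β ⊆ K⊙(α ∨ β)) and disjunctive inclusion (if ¬α ∉ K⊙(α ∨ β) then K⊙(α ∨ β) ⊆ K⊙α). Define 𝕊_i to be the collection of all sets S of possible worlds such that either S = ‖K‖, or (∅ ≠ S ⊆ {w : w ∈ ‖K⊙α‖ for some α with ‖K⊙α‖ ⊆ ‖α‖} and ‖K⊙α‖ ⊆ S for every α with S ∩ ‖α‖ ≠ ∅); define 𝕊 to be the collection of all sets S of possible worlds such that either S = ‖K‖, or (∅ ≠ S ⊆ {w : w ∈ ‖K⊙α‖ for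 some α with ‖K⊙α‖ ∩ ‖α‖ ≠ ∅}, ‖K⊙α‖ ⊆ S for every α with S ∩ ‖α‖ ≠ ∅, and for every α with S ∩ ‖α‖ = ∅, if S ∉ 𝕊_i then ‖K⊙α‖ ∩ S = ‖K‖). Then (𝕊_i, 𝕊) is a two level system of spheres centred on ‖K‖. -/

import Mathlib

/-- A propositional language `L`: a type of sentences closed under the
truth-functional connectives, together with a consequence operator `Cn`
satisfying inclusion, monotony, iteration, supraclassicality, compactness
and deduction. Supraclassicality is expressed via Boolean valuations that
respect the connectives. -/
structure PropLanguage where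
  Sentence : Type
  falsum : Sentence
  neg : Sentence → Sentence
  conj : Sentence → Sentence → Sentence
  disj : Sentence → Sentence → Sentence
  impl : Sentence → Sentence → Sentence
  biimpl : Sentence → Sentence → Sentence
  Cn : Set Sentence → Set Sentence
  cn_inclusion : ∀ A : Set Sentence, A ⊆ Cn A
  cn_monotony : ∀ A B : Set Sentence, A ⊆ B → Cn A ⊆ Cn B
  cn_iteration : ∀ A : Set Sentence, Cn (Cn A) = Cn A
  cn_supraclassical : ∀ (A : Set Sentence) (α : Sentence),
    (∀ v : Sentence → Bool,
        v falsum = false →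
        (∀ β, v (neg β) = !v β) →
        (∀ β γ, v (conj β γ) = (v β && v γ)) →
        (∀ β γ, v (disj β γ) = (v β || v γ)) →
        (∀ β γ, v (impl β γ) = (!v β || v γ)) →
        (∀ β γ, v (biimpl β γ) = (v β == v γ)) →
        (∀ β ∈ A, v β = true) → v α = true) →
    α ∈ Cn A
  cn_compact : ∀ (A : Set Sentence) (α : Sentence), α ∈ Cn A →
    ∃ A' : Set Sentence, A' ⊆ A ∧ A'.Finite ∧ α ∈ Cn A'
  cn_deduction : ∀ (A : Set Sentence) (α β : Sentence),
    β ∈ Cn (A ∪ {α}) ↔ impl α β ∈ Cn A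

namespace PropLanguage

variable (L : PropLanguage)

/-- A set of sentences is consistent iff it does not entail falsum. -/
def Consistent (A : Set L.Sentence) : Prop := L.falsum ∉ L.Cn A

/-- A belief set: a logically closed set of sentences. -/
def IsBeliefSet (K : Set L.Sentence) : Prop := K = L.Cn K

/-- Expansion: `K + α = Cn (K ∪ {α})`. -/
def expand (K : Set L.Sentence) (α : L.Sentence) : Set L.Sentence :=
  L.Cn (K ∪ {α})

/-- A possible world: a maximal consistent set of sentences. -/
def IsWorld (M : Set L.Sentence) : Prop :=
  L.Consistent M ∧ ∀ M' : Set L.Sentence, L.Consistent M' → M ⊆ M' → M' = M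

/-- `‖R‖`: the set of possible worlds containing `R`. -/
def worldsOf (R : Set L.Sentence) : Set (Set L.Sentence) :=
  {M | L.IsWorld M ∧ R ⊆ M}

/-- `‖α‖`: the set of possible worlds containing `Cn {α}`. -/
def wS (α : L.Sentence) : Set (Set L.Sentence) := L.worldsOf (L.Cn {α})

/-- `⋂ X`: the set of sentences belonging to every world in `X`. -/
def th (X : Set (Set L.Sentence)) : Set L.Sentence := {φ | ∀ M ∈ X, φ ∈ M}

/-! ### Postulates for an operator `od` on a belief set `K` -/

/-- Weak relative success: `α ∈ K⊙α` or `K⊙α ⊆ K`. -/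
def WeakRelativeSuccess (K : Set L.Sentence) (od : L.Sentence → Set L.Sentence) : Prop :=
  ∀ α, α ∈ od α ∨ od α ⊆ K

/-- Closure: `K⊙α = Cn (K⊙α)`. -/
def Closure (od : L.Sentence → Set L.Sentence) : Prop :=
  ∀ α, od α = L.Cn (od α)

/-- Inclusion: `K⊙α ⊆ K + α`. -/
def Inclusion (K : Set L.Sentence) (od : L.Sentence → Set L.Sentence) : Prop :=
  ∀ α, od α ⊆ L.expand K α

/-- Consistency preservation: if `K` is consistent then `K⊙α` is consistent. -/
def ConsistencyPreservation (K : Set L.Sentence) (od : L.Sentence → Set L.Sentence) : Prop :=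
  L.Consistent K → ∀ α, L.Consistent (od α)

/-- Vacuity: if `¬α ∉ K` then `K + α ⊆ K⊙α`. -/
def Vacuity (K : Set L.Sentence) (od : L.Sentence → Set L.Sentence) : Prop :=
  ∀ α, L.neg α ∉ K → L.expand K α ⊆ od α

/-- Weak vacuity: if `¬α ∉ K` then `K ⊆ K⊙α`. -/
def WeakVacuity (K : Set L.Sentence) (od : L.Sentence → Set L.Sentence) : Prop :=
  ∀ α, L.neg α ∉ K → K ⊆ od α

/-- Extensionality: if `⊢ α ↔ β` then `K⊙α = K⊙β`. -/
def Extensionality (od : L.Sentence → Set L.Sentence) : Prop :=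
  ∀ α β, L.biimpl α β ∈ L.Cn ∅ → od α = od β

/-- Strict improvement: if `α ∈ K⊙α` and `⊢ α → β` then `β ∈ K⊙β`. -/
def StrictImprovement (od : L.Sentence → Set L.Sentence) : Prop :=
  ∀ α β, α ∈ od α → L.impl α β ∈ L.Cn ∅ → β ∈ od β

/-- N-persistence: if `¬β ∈ K⊙β` then `¬β ∈ K⊙α` for all `α`. -/
def NPersistence (od : L.Sentence → Set L.Sentence) : Prop :=
  ∀ α β, L.neg β ∈ od β → L.neg β ∈ od α

/-- N-recovery: `K ⊆ (K⊙α) + ¬α`. -/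
def NRecovery (K : Set L.Sentence) (od : L.Sentence → Set L.Sentence) : Prop :=
  ∀ α, K ⊆ L.expand (od α) (L.neg α)

/-- Disjunctive overlap: `K⊙α ∩ K⊙β ⊆ K⊙(α ∨ β)`. -/
def DisjunctiveOverlap (od : L.Sentence → Set L.Sentence) : Prop :=
  ∀ α β, od α ∩ od β ⊆ od (L.disj α β)

/-- Disjunctive inclusion: if `¬α ∉ K⊙(α ∨ β)` then `K⊙(α ∨ β) ⊆ K⊙α`. -/
def DisjunctiveInclusion (od : L.Sentence → Set L.Sentence) : Prop :=
  ∀ α β, L.neg α ∉ od (L.disj α β) → od (L.disj α β) ⊆ od α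

/-- Weak disjunctive inclusion: if `¬α ∉ K⊙(α ∨ β)` then
`(K⊙(α ∨ β)) + (α ∨ β) ⊆ (K⊙α) + α`. -/
def WeakDisjunctiveInclusion (od : L.Sentence → Set L.Sentence) : Prop :=
  ∀ α β, L.neg α ∉ od (L.disj α β) →
    L.expand (od (L.disj α β)) (L.disj α β) ⊆ L.expand (od α) α

/-! ### AGM revision and two level credibility-limited revision -/

/-- An AGM revision on `K`: postulates (⋆1)–(⋆8). -/
def IsAGMRevision (K : Set L.Sentence) (star : L.Sentence → Set L.Sentence) : Prop :=
  (∀ α, star α = L.Cn (star α)) ∧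
  (∀ α, α ∈ star α) ∧
  (∀ α, star α ⊆ L.expand K α) ∧
  (∀ α, L.neg α ∉ K → L.expand K α ⊆ star α) ∧
  (∀ α, L.Consistent {α} → L.Consistent (star α)) ∧
  (∀ α β, L.biimpl α β ∈ L.Cn ∅ → star α = star β) ∧
  (∀ α β, star α ∩ star β ⊆ star (L.disj α β)) ∧
  (∀ α β, L.neg α ∉ star (L.disj α β) → star (L.disj α β) ⊆ star α)

/-- `od` is the two level CL revision operator induced by `star`, `CH`, `CL`:
`K⊙α = K⋆α` if `α ∈ C_H`; `K⊙α = (K⋆α) ∩ K` if `α ∈ C_L`;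
`K⊙α = K` if `α ∉ C_H ∪ C_L`. -/
def IsTwoLevelCL (K : Set L.Sentence) (od star : L.Sentence → Set L.Sentence)
    (CH CL : Set L.Sentence) : Prop :=
  ∀ α, (α ∈ CH → od α = star α) ∧ (α ∈ CL → od α = star α ∩ K) ∧
    (α ∉ CH ∪ CL → od α = K)

/-- Credibility of logical equivalents. -/
def CredLogEquiv (C : Set L.Sentence) : Prop :=
  ∀ α β, L.biimpl α β ∈ L.Cn ∅ → (α ∈ C ↔ β ∈ C)

/-- Single sentence closure. -/
def SingleSentenceClosure (C : Set L.Sentence) : Prop :=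
  ∀ α ∈ C, L.Cn {α} ⊆ C

/-- Element consistency. -/
def ElementConsistency (C : Set L.Sentence) : Prop :=
  ∀ α ∈ C, L.Consistent {α}

/-- Credibility lower bounding (w.r.t. `K`). -/
def CredLowerBound (K C : Set L.Sentence) : Prop :=
  L.Consistent K → K ⊆ C

/-- Condition (C - ⋆): if `α ∉ C` and `β ∈ C` then `¬α ∈ K⋆β`. -/
def CondCStar (K : Set L.Sentence) (star : L.Sentence → Set L.Sentence)
    (C : Set L.Sentence) : Prop :=
  ∀ α β, α ∉ C → β ∈ C → L.neg α ∈ star β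

/-! ### Two level systems of spheres -/

/-- `(Si, S)` is a two level system of spheres centred on `‖K‖`. -/
def IsTwoLevelSystem (K : Set L.Sentence)
    (Si S : Set (Set (Set L.Sentence))) : Prop :=
  (∀ X ∈ S, ∀ M ∈ X, L.IsWorld M) ∧
  (∀ U ∈ S, ∀ V ∈ S, U ⊆ V ∨ V ⊆ U) ∧
  (∀ U ∈ Si, ∀ V ∈ Si, U ⊆ V ∨ V ⊆ U) ∧
  L.worldsOf K ∈ S ∧ (∀ U ∈ S, L.worldsOf K ⊆ U) ∧
  L.worldsOf K ∈ Si ∧ (∀ U ∈ Si, L.worldsOf K ⊆ U) ∧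
  (∀ α, (∃ U ∈ S, (U ∩ L.wS α).Nonempty) →
    ∃ U ∈ S, (U ∩ L.wS α).Nonempty ∧ ∀ V ∈ S, (V ∩ L.wS α).Nonempty → U ⊆ V) ∧
  (∀ α, (∃ U ∈ Si, (U ∩ L.wS α).Nonempty) →
    ∃ U ∈ Si, (U ∩ L.wS α).Nonempty ∧ ∀ V ∈ Si, (V ∩ L.wS α).Nonempty → U ⊆ V) ∧
  Si ⊆ S ∧
  (∀ X ∈ Si, ∀ Y ∈ S, Y ∉ Si → X ⊆ Y)

/-- `od` is the system of spheres-based two level CL revision operator induced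
by `(Si, S)` (centred on `‖K‖`): if `S_α` (the smallest sphere of `S` meeting
`‖α‖`) is in `Si` then `K⊙α = ⋂(S_α ∩ ‖α‖)`; if `S_α ∈ S \ Si` then
`K⊙α = ⋂(‖K‖ ∪ (S_α ∩ ‖α‖))`; and if no sphere of `S` meets `‖α‖` then
`K⊙α = K`. -/
def IsSphereRevision (K : Set L.Sentence)
    (Si S : Set (Set (Set L.Sentence)))
    (od : L.Sentence → Set L.Sentence) : Prop :=
  ∀ α,
    (∀ Sa ∈ S, (Sa ∩ L.wS α).Nonempty →
      (∀ V ∈ S, (V ∩ L.wS α).Nonempty → Sa ⊆ V) →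
      (Sa ∈ Si → od α = L.th (Sa ∩ L.wS α)) ∧
      (Sa ∉ Si → od α = L.th (L.worldsOf K ∪ (Sa ∩ L.wS α)))) ∧
    ((∀ X ∈ S, X ∩ L.wS α = ∅) → od α = K)

end PropLanguage

namespace PropLanguage

variable {L : PropLanguage}


theorem cn_sub {A B : Set L.Sentence} (h : B ⊆ L.Cn A) : L.Cn B ⊆ L.Cn A := by
  intro φ hφ
  have := L.cn_monotony B (L.Cn A) h hφ
  rwa [L.cn_iteration] at this

theorem cn_cut {A : Set L.Sentence} {φ ψ : L.Sentence} (h1 : φ ∈ L.Cn A)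
    (h2 : ψ ∈ L.Cn {φ}) : ψ ∈ L.Cn A :=
  cn_sub (Set.singleton_subset_iff.2 h1) h2

theorem cn_cut2 {A : Set L.Sentence} {φ ψ χ : L.Sentence} (h1 : φ ∈ L.Cn A)
    (h2 : ψ ∈ L.Cn A) (h3 : χ ∈ L.Cn {φ, ψ}) : χ ∈ L.Cn A := by
  refine cn_sub ?_ h3
  intro x hx
  rcases hx with h | h
  · exact h ▸ h1
  · exact (Set.mem_singleton_iff.1 h) ▸ h2

theorem taut_neg_falsum : L.neg L.falsum ∈ L.Cn ∅ := by
  apply L.cn_supraclassical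
  intro v hf hn _ _ _ _ _
  rw [hn, hf]; rfl

theorem falsum_mem_pair {φ : L.Sentence} : L.falsum ∈ L.Cn {φ, L.neg φ} := by
  apply L.cn_supraclassical
  intro v _ hn _ _ _ _ hA
  have h1 : v φ = true := hA φ (by simp)
  have h2 : v (L.neg φ) = true := hA (L.neg φ) (by simp)
  rw [hn, h1] at h2; simp at h2

theorem neg_of_impl_falsum {φ : L.Sentence} : L.neg φ ∈ L.Cn {L.impl φ L.falsum} := by
  apply L.cn_supraclassical
  intro v hf hn _ _ hi _ hA
  have h1 : v (L.impl φ L.falsum) = true := hA _ (by simp)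
  rw [hi, hf] at h1
  rw [hn]
  simpa using h1

theorem impl_falsum_of_neg {φ : L.Sentence} : L.impl φ L.falsum ∈ L.Cn {L.neg φ} := by
  apply L.cn_supraclassical
  intro v hf hn _ _ hi _ hA
  have h1 : v (L.neg φ) = true := hA _ (by simp)
  rw [hn] at h1
  rw [hi, hf]
  simpa using h1

theorem phi_of_impl_neg_falsum {φ : L.Sentence} :
    φ ∈ L.Cn {L.impl (L.neg φ) L.falsum} := by
  apply L.cn_supraclassical
  intro v hf hn _ _ hi _ hA
  have h1 : v (L.impl (L.neg φ) L.falsum) = true := hA _ (by simp)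
  rw [hi, hn, hf] at h1
  simpa using h1

theorem disj_intro_left {φ ψ : L.Sentence} : L.disj φ ψ ∈ L.Cn {φ} := by
  apply L.cn_supraclassical
  intro v _ _ _ hd _ _ hA
  have h1 : v φ = true := hA _ (by simp)
  rw [hd, h1]; rfl

theorem disj_intro_right {φ ψ : L.Sentence} : L.disj φ ψ ∈ L.Cn {ψ} := by
  apply L.cn_supraclassical
  intro v _ _ _ hd _ _ hA
  have h1 : v ψ = true := hA _ (by simp)
  rw [hd, h1]; simp

theorem falsum_of_disj {φ ψ : L.Sentence} :
    L.falsum ∈ L.Cn {L.disj φ ψ, L.neg φ, L.neg ψ} := by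
  apply L.cn_supraclassical
  intro v _ hn _ hd _ _ hA
  have h1 : v (L.disj φ ψ) = true := hA _ (by simp)
  have h2 : v (L.neg φ) = true := hA _ (by simp)
  have h3 : v (L.neg ψ) = true := hA _ (by simp)
  rw [hn] at h2 h3
  rw [hd] at h1
  rcases Bool.or_eq_true_iff.1 h1 with h | h
  · rw [h] at h2; simp at h2
  · rw [h] at h3; simp at h3

theorem neg_left_of_neg_disj {φ ψ : L.Sentence} :
    L.neg φ ∈ L.Cn {L.neg (L.disj φ ψ)} := by
  apply L.cn_supraclassical
  intro v _ hn _ hd _ _ hA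
  have h1 : v (L.neg (L.disj φ ψ)) = true := hA _ (by simp)
  rw [hn, hd] at h1
  rw [hn]
  simp only [Bool.not_or] at h1
  exact (Bool.and_eq_true_iff.1 h1).1

theorem disj_comm_taut {φ ψ : L.Sentence} :
    L.biimpl (L.disj φ ψ) (L.disj ψ φ) ∈ L.Cn ∅ := by
  apply L.cn_supraclassical
  intro v _ _ _ hd _ hb _
  rw [hb, hd, hd, Bool.or_comm]
  simp

theorem neg_mem_of_inconsistent {A : Set L.Sentence} {α : L.Sentence}
    (h : L.falsum ∈ L.Cn (A ∪ {α})) : L.neg α ∈ L.Cn A := by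
  have := (L.cn_deduction A α L.falsum).1 h
  exact cn_cut this neg_of_impl_falsum

theorem inconsistent_of_neg_mem {A : Set L.Sentence} {α : L.Sentence}
    (h : L.neg α ∈ L.Cn A) : L.falsum ∈ L.Cn (A ∪ {α}) := by
  refine (L.cn_deduction A α L.falsum).2 ?_
  exact cn_cut h impl_falsum_of_neg

theorem IsWorld.cn_eq {M : Set L.Sentence} (hM : L.IsWorld M) : L.Cn M = M := by
  refine hM.2 (L.Cn M) ?_ (L.cn_inclusion M)
  show L.falsum ∉ L.Cn (L.Cn M)
  rw [L.cn_iteration]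
  exact hM.1

theorem IsWorld.mem_cn {M : Set L.Sentence} (hM : L.IsWorld M) {φ : L.Sentence}
    (h : φ ∈ L.Cn M) : φ ∈ M := hM.cn_eq ▸ h

theorem IsWorld.not_both {M : Set L.Sentence} (hM : L.IsWorld M) {φ : L.Sentence}
    (h1 : φ ∈ M) (h2 : L.neg φ ∈ M) : False := by
  apply hM.1
  refine cn_sub ?_ (falsum_mem_pair (φ := φ))
  intro x hx
  rcases hx with h | h
  · exact L.cn_inclusion M (h ▸ h1)
  · exact L.cn_inclusion M ((Set.mem_singleton_iff.1 h) ▸ h2)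

theorem IsWorld.neg_mem {M : Set L.Sentence} (hM : L.IsWorld M) {φ : L.Sentence}
    (h : φ ∉ M) : L.neg φ ∈ M := by
  have hcons : L.Consistent (M ∪ {L.neg φ}) := by
    intro hbad
    have h1 := (L.cn_deduction M (L.neg φ) L.falsum).1 hbad
    exact h (hM.mem_cn (cn_cut h1 phi_of_impl_neg_falsum))
  have := hM.2 (M ∪ {L.neg φ}) hcons Set.subset_union_left
  rw [← this]
  exact Set.mem_union_right _ rfl

theorem IsWorld.disj_mem_iff {M : Set L.Sentence} (hM : L.IsWorld M) {φ ψ : L.Sentence} :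
    L.disj φ ψ ∈ M ↔ φ ∈ M ∨ ψ ∈ M := by
  constructor
  · intro h
    by_contra hc
    push_neg at hc
    have h2 := hM.neg_mem hc.1
    have h3 := hM.neg_mem hc.2
    apply hM.1
    refine cn_sub ?_ (falsum_of_disj (φ := φ) (ψ := ψ))
    intro x hx
    apply L.cn_inclusion M
    rcases hx with h' | h' | h'
    · exact h' ▸ h
    · exact h' ▸ h2
    · exact (Set.mem_singleton_iff.1 h') ▸ h3
  · intro h
    rcases h with h | h
    · exact hM.mem_cn (cn_cut (L.cn_inclusion M h) disj_intro_left)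
    · exact hM.mem_cn (cn_cut (L.cn_inclusion M h) disj_intro_right)

theorem chain_finite_subset {X : Type} {c : Set (Set X)} (hc : IsChain (· ⊆ ·) c)
    (hne : c.Nonempty) {A : Set X} (hfin : A.Finite) :
    A ⊆ ⋃₀ c → ∃ t ∈ c, A ⊆ t := by
  refine Set.Finite.induction_on (motive := fun A _ => A ⊆ ⋃₀ c → ∃ t ∈ c, A ⊆ t) A hfin ?_ ?_
  · intro _
    obtain ⟨t, ht⟩ := hne
    exact ⟨t, ht, Set.empty_subset t⟩
  · intro a s _ _ ih hsub
    obtain ⟨t, htc, hts⟩ := ih (fun x hx => hsub (Set.mem_insert_of_mem a hx))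
    obtain ⟨u, huc, hau⟩ := hsub (Set.mem_insert a s)
    rcases hc.total htc huc with h | h
    · exact ⟨u, huc, Set.insert_subset hau (hts.trans h)⟩
    · exact ⟨t, htc, Set.insert_subset (h hau) hts⟩

theorem lindenbaum {A : Set L.Sentence} (hA : L.Consistent A) :
    ∃ M, L.IsWorld M ∧ A ⊆ M := by
  have hZ : ∀ c ⊆ {B : Set L.Sentence | L.Consistent B}, IsChain (· ⊆ ·) c →
      c.Nonempty → ∃ ub ∈ {B : Set L.Sentence | L.Consistent B}, ∀ s ∈ c, s ⊆ ub := by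
    intro c hcS hchain hcne
    refine ⟨⋃₀ c, ?_, fun s hs => Set.subset_sUnion_of_mem hs⟩
    intro hbad
    obtain ⟨A', hA'sub, hA'fin, hA'⟩ := L.cn_compact _ _ hbad
    obtain ⟨t, htc, hAt⟩ := chain_finite_subset hchain hcne hA'fin hA'sub
    exact hcS htc (L.cn_monotony _ t hAt hA')
  obtain ⟨M, hAM, hMmax⟩ :=
    zorn_subset_nonempty {B : Set L.Sentence | L.Consistent B} hZ A hA
  refine ⟨M, ⟨hMmax.1, ?_⟩, hAM⟩
  intro M' hM' hsub
  exact le_antisymm (hMmax.2 hM' hsub) hsub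

theorem mem_cn_iff {A : Set L.Sentence} {φ : L.Sentence} :
    φ ∈ L.Cn A ↔ ∀ M, L.IsWorld M → A ⊆ M → φ ∈ M := by
  constructor
  · intro h M hM hAM
    exact hM.mem_cn (L.cn_monotony A M hAM h)
  · intro h
    by_contra hc
    have hcons : L.Consistent (A ∪ {L.neg φ}) := by
      intro hbad
      have h1 := (L.cn_deduction A (L.neg φ) L.falsum).1 hbad
      exact hc (cn_cut h1 phi_of_impl_neg_falsum)
    obtain ⟨M, hM, hsub⟩ := lindenbaum hcons
    have hφ := h M hM (Set.subset_union_left.trans hsub)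
    exact hM.not_both hφ (hsub (Set.mem_union_right _ rfl))







theorem isWorld_of_mem_worldsOf {R M : Set L.Sentence} (h : M ∈ L.worldsOf R) :
    L.IsWorld M := h.1

theorem mem_cn_of_worlds {A : Set L.Sentence} {φ : L.Sentence}
    (h : ∀ M ∈ L.worldsOf A, φ ∈ M) : φ ∈ L.Cn A :=
  mem_cn_iff.2 (fun M hM hAM => h M ⟨hM, hAM⟩)

theorem worldsOf_cn (A : Set L.Sentence) : L.worldsOf (L.Cn A) = L.worldsOf A := by
  ext M
  constructor
  · intro ⟨hM, hsub⟩
    exact ⟨hM, (L.cn_inclusion A).trans hsub⟩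
  · intro ⟨hM, hsub⟩
    refine ⟨hM, fun φ hφ => hM.mem_cn (L.cn_monotony A M hsub hφ)⟩

theorem worldsOf_anti {A B : Set L.Sentence} (h : A ⊆ B) :
    L.worldsOf B ⊆ L.worldsOf A := fun M hM => ⟨hM.1, h.trans hM.2⟩

theorem mem_wS {M : Set L.Sentence} {α : L.Sentence} :
    M ∈ L.wS α ↔ L.IsWorld M ∧ α ∈ M := by
  unfold wS
  rw [worldsOf_cn]
  constructor
  · intro ⟨hM, hsub⟩
    exact ⟨hM, hsub rfl⟩
  · intro ⟨hM, hα⟩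
    exact ⟨hM, Set.singleton_subset_iff.2 hα⟩

theorem wS_disj {α β : L.Sentence} : L.wS (L.disj α β) = L.wS α ∪ L.wS β := by
  ext M
  simp only [Set.mem_union, mem_wS]
  constructor
  · intro ⟨hM, h⟩
    rcases hM.disj_mem_iff.1 h with h | h
    · exact Or.inl ⟨hM, h⟩
    · exact Or.inr ⟨hM, h⟩
  · intro h
    rcases h with ⟨hM, h⟩ | ⟨hM, h⟩
    · exact ⟨hM, hM.disj_mem_iff.2 (Or.inl h)⟩
    · exact ⟨hM, hM.disj_mem_iff.2 (Or.inr h)⟩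

theorem worldsOf_union_singleton (A : Set L.Sentence) (α : L.Sentence) :
    L.worldsOf (A ∪ {α}) = L.worldsOf A ∩ L.wS α := by
  ext M
  constructor
  · intro ⟨hM, hsub⟩
    exact ⟨⟨hM, Set.subset_union_left.trans hsub⟩,
      mem_wS.2 ⟨hM, hsub (Set.mem_union_right _ rfl)⟩⟩
  · intro ⟨⟨hM, hsub⟩, hw⟩
    refine ⟨hM, Set.union_subset hsub (Set.singleton_subset_iff.2 (mem_wS.1 hw).2)⟩

theorem exists_world_inter {A : Set L.Sentence} {α : L.Sentence}
    (h : L.neg α ∉ L.Cn A) : (L.worldsOf A ∩ L.wS α).Nonempty := by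
  have hcons : L.Consistent (A ∪ {α}) := fun hbad => h (neg_mem_of_inconsistent hbad)
  obtain ⟨M, hM, hsub⟩ := lindenbaum hcons
  exact ⟨M, ⟨hM, Set.subset_union_left.trans hsub⟩,
    mem_wS.2 ⟨hM, hsub (Set.mem_union_right _ rfl)⟩⟩

theorem not_neg_mem_of {A M : Set L.Sentence} {α : L.Sentence}
    (hM : M ∈ L.worldsOf A) (hα : α ∈ M) : L.neg α ∉ L.Cn A := by
  intro hbad
  exact hM.1.not_both hα (hM.1.mem_cn (L.cn_monotony A M hM.2 hbad))

theorem nonempty_worldsOf {A : Set L.Sentence} (h : L.Consistent A) :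
    (L.worldsOf A).Nonempty := by
  obtain ⟨M, hM, hsub⟩ := lindenbaum h
  exact ⟨M, hM, hsub⟩

theorem subset_wS_of_mem {A : Set L.Sentence} {α : L.Sentence} (h : α ∈ L.Cn A) :
    L.worldsOf A ⊆ L.wS α := fun M hM =>
  mem_wS.2 ⟨hM.1, hM.1.mem_cn (L.cn_monotony A M hM.2 h)⟩



end PropLanguage


open PropLanguage in
/-- the pair `(Si, S)` constructed from an operator satisfying
the eleven listed postulates is a two level system of spheres centred on
`‖K‖`. -/
theorem constructed_pair_is_twoLevelSystem
    (L : PropLanguage) (K : Set L.Sentence)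
    (hK : L.IsBeliefSet K) (hKcons : L.Consistent K)
    (od : L.Sentence → Set L.Sentence)
    (h1 : L.WeakRelativeSuccess K od) (h2 : L.Closure od)
    (h3 : L.Inclusion K od) (h4 : L.ConsistencyPreservation K od)
    (h5 : L.Vacuity K od) (h6 : L.Extensionality od)
    (h7 : L.StrictImprovement od) (h8 : L.NPersistence od)
    (h9 : L.NRecovery K od) (h10 : L.DisjunctiveOverlap od)
    (h11 : L.DisjunctiveInclusion od)
    (Si S : Set (Set (Set L.Sentence)))
    (hSi : Si = {Sp | Sp = L.worldsOf K ∨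
      (Sp.Nonempty ∧
       Sp ⊆ {w | ∃ α, w ∈ L.worldsOf (od α) ∧ L.worldsOf (od α) ⊆ L.wS α} ∧
       ∀ α, (Sp ∩ L.wS α).Nonempty → L.worldsOf (od α) ⊆ Sp)})
    (hS : S = {Sp | Sp = L.worldsOf K ∨
      (Sp.Nonempty ∧
       Sp ⊆ {w | ∃ α, w ∈ L.worldsOf (od α) ∧
                      (L.worldsOf (od α) ∩ L.wS α).Nonempty} ∧
       (∀ α, (Sp ∩ L.wS α).Nonempty → L.worldsOf (od α) ⊆ Sp) ∧
       (∀ α, Sp ∩ L.wS α = ∅ → Sp ∉ Si →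
          L.worldsOf (od α) ∩ Sp = L.worldsOf K))}) :
    L.IsTwoLevelSystem K Si S := by
  classical
  have hKc : K = L.Cn K := hK
  have hτK : L.neg L.falsum ∈ K := by
    rw [hKc]; exact L.cn_monotony ∅ K (Set.empty_subset K) taut_neg_falsum
  have hnτK : L.neg (L.neg L.falsum) ∉ K := by
    intro hbad
    apply hKcons
    exact cn_cut2 (L.cn_inclusion K hτK) (L.cn_inclusion K hbad) falsum_mem_pair
  have hodτ : od (L.neg L.falsum) = K := by
    apply Set.Subset.antisymm
    · refine (h3 _).trans ?_
      have hsub : K ∪ {L.neg L.falsum} ⊆ K :=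
        Set.union_subset subset_rfl (Set.singleton_subset_iff.2 hτK)
      intro x hx
      rw [hKc]
      exact L.cn_monotony _ K hsub hx
    · refine Set.Subset.trans ?_ (h5 _ hnτK)
      intro x hx
      exact L.cn_inclusion _ (Set.mem_union_left _ hx)
  have hKne : (L.worldsOf K).Nonempty := nonempty_worldsOf hKcons
  have hτmem : ∀ M : Set L.Sentence, L.IsWorld M → M ∈ L.wS (L.neg L.falsum) :=
    fun M hM => mem_wS.2 ⟨hM, hM.mem_cn (L.cn_monotony ∅ M (Set.empty_subset M) taut_neg_falsum)⟩
  have hSmem : ∀ U, U ∈ S ↔ (U = L.worldsOf K ∨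
      (U.Nonempty ∧
       U ⊆ {w | ∃ α, w ∈ L.worldsOf (od α) ∧ (L.worldsOf (od α) ∩ L.wS α).Nonempty} ∧
       (∀ α, (U ∩ L.wS α).Nonempty → L.worldsOf (od α) ⊆ U) ∧
       (∀ α, U ∩ L.wS α = ∅ → U ∉ Si → L.worldsOf (od α) ∩ U = L.worldsOf K))) := by
    intro U; rw [hS]; exact Iff.rfl
  have hSimem : ∀ U, U ∈ Si ↔ (U = L.worldsOf K ∨
      (U.Nonempty ∧
       U ⊆ {w | ∃ α, w ∈ L.worldsOf (od α) ∧ L.worldsOf (od α) ⊆ L.wS α} ∧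
       (∀ α, (U ∩ L.wS α).Nonempty → L.worldsOf (od α) ⊆ U))) := by
    intro U; rw [hSi]; exact Iff.rfl
  have hKS : L.worldsOf K ∈ S := (hSmem _).2 (Or.inl rfl)
  have hKSi : L.worldsOf K ∈ Si := (hSimem _).2 (Or.inl rfl)
  have hSiS : Si ⊆ S := by
    intro U hU
    rcases (hSimem U).1 hU with h | ⟨hne, hgens, habs⟩
    · exact (hSmem U).2 (Or.inl h)
    · refine (hSmem U).2 (Or.inr ⟨hne, ?_, habs, fun α _ hUSi => absurd hU hUSi⟩)
      intro w hw
      obtain ⟨α, hwα, hsub⟩ := hgens hw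
      exact ⟨α, hwα, ⟨w, hwα, hsub hwα⟩⟩
  have hworlds : ∀ X ∈ S, ∀ M ∈ X, L.IsWorld M := by
    intro X hX M hM
    rcases (hSmem X).1 hX with hc | ⟨_, hgens, _, _⟩
    · subst hc; exact hM.1
    · obtain ⟨α, hMα, _⟩ := hgens hM
      exact hMα.1
  have hWsub : ∀ U ∈ S, L.worldsOf K ⊆ U := by
    intro U hU
    rcases (hSmem U).1 hU with hc | ⟨⟨w, hw⟩, hgens, habs, _⟩
    · rw [hc]
    · have hwworld : L.IsWorld w := by
        obtain ⟨α, hwα, _⟩ := hgens hw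
        exact hwα.1
      have := habs (L.neg L.falsum) ⟨w, hw, hτmem w hwworld⟩
      rw [hodτ] at this
      exact this
  have habsorb : ∀ U ∈ S, ∀ δ, (U ∩ L.wS δ).Nonempty → L.worldsOf (od δ) ⊆ U := by
    intro U hU δ hne
    rcases (hSmem U).1 hU with hc | ⟨_, _, habs, _⟩
    · subst hc
      obtain ⟨x, hxK, hxδ⟩ := hne
      have hnδ : L.neg δ ∉ K := by
        have := not_neg_mem_of hxK (mem_wS.1 hxδ).2
        rw [← hKc] at this; exact this
      have hodeq : od δ = L.expand K δ := Set.Subset.antisymm (h3 δ) (h5 δ hnδ)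
      rw [hodeq]
      show L.worldsOf (L.Cn (K ∪ {δ})) ⊆ L.worldsOf K
      rw [worldsOf_cn, worldsOf_union_singleton]
      exact Set.inter_subset_left
    · exact habs δ hne
  have hLemC : ∀ U ∈ S, ∀ (α : L.Sentence), ∀ w ∈ U, w ∈ L.wS α → L.neg α ∉ od α := by
    intro U hU α w hwU hwα hbad
    have hw : L.IsWorld w := (mem_wS.1 hwα).1
    have hαw : α ∈ w := (mem_wS.1 hwα).2
    rcases (hSmem U).1 hU with hc | ⟨_, hgens, _, _⟩
    · subst hc
      have hKw : K ⊆ w := hwU.2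
      have hnαK : L.neg α ∉ K := fun hmem => hw.not_both hαw (hKw hmem)
      have hαod : α ∈ od α := h5 α hnαK (L.cn_inclusion _ (Set.mem_union_right _ rfl))
      apply h4 hKcons α
      exact cn_cut2 (L.cn_inclusion _ hαod) (L.cn_inclusion _ hbad) falsum_mem_pair
    · obtain ⟨ε, hwε, _⟩ := hgens hwU
      exact hw.not_both hαw (hwε.2 (h8 ε α hbad))
  have hodne : ∀ U ∈ S, ∀ α, (U ∩ L.wS α).Nonempty →
      (L.worldsOf (od α) ∩ L.wS α).Nonempty := by
    intro U hU α hne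
    obtain ⟨w, hwU, hwα⟩ := hne
    have h' : L.neg α ∉ L.Cn (od α) := by
      rw [← h2 α]; exact hLemC U hU α w hwU hwα
    exact exists_world_inter h'
  have hClaimA : ∀ T ∈ S, ∀ t ∈ T, t ∉ L.worldsOf K →
      ∃ α, t ∈ L.worldsOf (od α) ∧ (L.worldsOf (od α) ∩ L.wS α).Nonempty ∧
        (T ∩ L.wS α).Nonempty := by
    intro T hT t htT htK
    rcases (hSmem T).1 hT with hc | ⟨_, hgens, habs, hthird⟩
    · exact absurd (hc ▸ htT) htK
    · obtain ⟨α, htα, hαne⟩ := hgens htT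
      by_cases hTα : (T ∩ L.wS α).Nonempty
      · exact ⟨α, htα, hαne, hTα⟩
      · have hTαe : T ∩ L.wS α = ∅ := Set.not_nonempty_iff_eq_empty.1 hTα
        by_cases hTSi : T ∈ Si
        · rcases (hSimem T).1 hTSi with hc2 | ⟨_, hgensi, _⟩
          · exact absurd (hc2 ▸ htT) htK
          · obtain ⟨α', htα', hsub'⟩ := hgensi htT
            have htw : t ∈ L.wS α' := hsub' htα'
            exact ⟨α', htα', ⟨t, htα', htw⟩, ⟨t, htT, htw⟩⟩
        · have heq := hthird α hTαe hTSi
          exact absurd (heq ▸ (⟨htα, htT⟩ : t ∈ L.worldsOf (od α) ∩ T)) htK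
  have hTot : ∀ U ∈ S, ∀ V ∈ S, U ⊆ V ∨ V ⊆ U := by
    intro U hU V hV
    by_contra hns
    push_neg at hns
    obtain ⟨u, huU, huV⟩ := Set.not_subset.1 hns.1
    obtain ⟨v, hvV, hvU⟩ := Set.not_subset.1 hns.2
    have huK : u ∉ L.worldsOf K := fun h => huV (hWsub V hV h)
    have hvK : v ∉ L.worldsOf K := fun h => hvU (hWsub U hU h)
    obtain ⟨α, huα, hαne, hUα⟩ := hClaimA U hU u huU huK
    obtain ⟨β, hvβ, hβne, hVβ⟩ := hClaimA V hV v hvV hvK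
    have hγ : L.neg (L.disj α β) ∉ od (L.disj α β) := by
      intro hbad
      have h8' : L.neg (L.disj α β) ∈ od α := h8 α (L.disj α β) hbad
      have hnαα : L.neg α ∈ od α := by
        rw [h2 α]
        exact cn_cut (L.cn_inclusion _ h8') neg_left_of_neg_disj
      obtain ⟨x, hxod, hxα⟩ := hαne
      exact hxod.1.not_both (mem_wS.1 hxα).2 (hxod.2 hnαα)
    have hγ' : L.neg (L.disj α β) ∉ L.Cn (od (L.disj α β)) := by
      rw [← h2 (L.disj α β)]; exact hγ
    obtain ⟨w, hwodγ, hwγ⟩ := exists_world_inter hγ'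
    have hw : L.IsWorld w := hwodγ.1
    rcases hw.disj_mem_iff.1 (mem_wS.1 hwγ).2 with hwα | hwβ
    · have hnα : L.neg α ∉ od (L.disj α β) :=
        fun hm => not_neg_mem_of hwodγ hwα (L.cn_inclusion _ hm)
      have hsub : od (L.disj α β) ⊆ od α := h11 α β hnα
      have hWα : L.worldsOf (od α) ⊆ L.worldsOf (od (L.disj α β)) := worldsOf_anti hsub
      obtain ⟨x, hxV, hxβ⟩ := hVβ
      have hxγ : x ∈ L.wS (L.disj α β) :=
        mem_wS.2 ⟨(mem_wS.1 hxβ).1,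
          ((mem_wS.1 hxβ).1).disj_mem_iff.2 (Or.inr (mem_wS.1 hxβ).2)⟩
      have hsubV : L.worldsOf (od (L.disj α β)) ⊆ V := habsorb V hV _ ⟨x, hxV, hxγ⟩
      exact huV (hsubV (hWα huα))
    · have hodcomm : od (L.disj α β) = od (L.disj β α) :=
        h6 (L.disj α β) (L.disj β α) disj_comm_taut
      have hnβ : L.neg β ∉ od (L.disj β α) := by
        intro hm
        rw [← hodcomm] at hm
        exact not_neg_mem_of hwodγ hwβ (L.cn_inclusion _ hm)
      have hsub : od (L.disj β α) ⊆ od β := h11 β α hnβ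
      have hWβ : L.worldsOf (od β) ⊆ L.worldsOf (od (L.disj α β)) := by
        rw [hodcomm]; exact worldsOf_anti hsub
      obtain ⟨x, hxU, hxα⟩ := hUα
      have hxγ : x ∈ L.wS (L.disj α β) :=
        mem_wS.2 ⟨(mem_wS.1 hxα).1,
          ((mem_wS.1 hxα).1).disj_mem_iff.2 (Or.inl (mem_wS.1 hxα).2)⟩
      have hsubU : L.worldsOf (od (L.disj α β)) ⊆ U := habsorb U hU _ ⟨x, hxU, hxγ⟩
      exact hvU (hsubU (hWβ hvβ))
  have hLimS : ∀ α, (∃ U ∈ S, (U ∩ L.wS α).Nonempty) →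
      ∃ U ∈ S, (U ∩ L.wS α).Nonempty ∧ ∀ V ∈ S, (V ∩ L.wS α).Nonempty → U ⊆ V := by
    intro α hex
    obtain ⟨U₀, hU₀S, hU₀ne⟩ := hex
    by_cases hKα : (L.worldsOf K ∩ L.wS α).Nonempty
    · exact ⟨L.worldsOf K, hKS, hKα, fun V hV _ => hWsub V hV⟩
    · set F : Set (Set (Set L.Sentence)) := {U | U ∈ S ∧ (U ∩ L.wS α).Nonempty} with hFdef
      set C : Set (Set L.Sentence) := ⋂₀ F with hCdef
      have hU₀F : U₀ ∈ F := ⟨hU₀S, hU₀ne⟩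
      have hnotK : ∀ U ∈ F, U ≠ L.worldsOf K := by
        intro U hUF hc
        exact hKα (hc ▸ hUF.2)
      have hCsub : ∀ U ∈ F, C ⊆ U := fun U hUF => Set.sInter_subset_of_mem hUF
      have hodC : L.worldsOf (od α) ⊆ C := by
        intro x hx
        refine Set.mem_sInter.2 (fun U hUF => ?_)
        rcases (hSmem U).1 hUF.1 with hc | ⟨_, _, habs, _⟩
        · exact absurd hc (hnotK U hUF)
        · exact habs α hUF.2 hx
      have hodαne := hodne U₀ hU₀S α hU₀ne
      have hCα : (C ∩ L.wS α).Nonempty := by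
        obtain ⟨x, hx1, hx2⟩ := hodαne
        exact ⟨x, hodC hx1, hx2⟩
      have hWC : L.worldsOf K ⊆ C :=
        fun x hx => Set.mem_sInter.2 (fun U hUF => hWsub U hUF.1 hx)
      have hCne : C.Nonempty := hKne.mono hWC
      have habsC : ∀ δ, (C ∩ L.wS δ).Nonempty → L.worldsOf (od δ) ⊆ C := by
        rintro δ ⟨x, hxC, hxδ⟩ y hy
        refine Set.mem_sInter.2 (fun U hUF => ?_)
        rcases (hSmem U).1 hUF.1 with hc | ⟨_, _, habs, _⟩
        · exact absurd hc (hnotK U hUF)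
        · exact habs δ ⟨x, hCsub U hUF hxC, hxδ⟩ hy
      have hCgens : C ⊆ {w | ∃ δ, w ∈ L.worldsOf (od δ) ∧
          (L.worldsOf (od δ) ∩ L.wS δ).Nonempty} := by
        rcases (hSmem U₀).1 hU₀S with hc | ⟨_, hgens, _, _⟩
        · exact absurd hc (hnotK U₀ hU₀F)
        · exact (hCsub U₀ hU₀F).trans hgens
      have hthirdC : ∀ δ, C ∩ L.wS δ = ∅ → C ∉ Si →
          L.worldsOf (od δ) ∩ C = L.worldsOf K := by
        intro δ hδe hCSi
        apply Set.Subset.antisymm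
        · rintro x ⟨hxod, hxC⟩
          have hxw : L.IsWorld x := hxod.1
          have hδx : δ ∉ x := by
            intro hmem
            have hbad : x ∈ C ∩ L.wS δ := ⟨hxC, mem_wS.2 ⟨hxw, hmem⟩⟩
            rw [hδe] at hbad
            exact hbad
          have hnδx : L.neg δ ∈ x := hxw.neg_mem hδx
          refine ⟨hxw, ?_⟩
          intro φ hφK
          have hφ : φ ∈ L.Cn (od δ ∪ {L.neg δ}) := h9 δ hφK
          refine hxw.mem_cn (L.cn_monotony _ x ?_ hφ)
          exact Set.union_subset hxod.2 (Set.singleton_subset_iff.2 hnδx)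
        · intro x hxK
          refine ⟨⟨hxK.1, ?_⟩, hWC hxK⟩
          rcases h1 δ with hδod | hodK
          · exfalso
            have hex2 : ∃ U ∈ F, ¬(U ∩ L.wS δ).Nonempty := by
              by_contra hall
              push_neg at hall
              have hodδC : L.worldsOf (od δ) ⊆ C := by
                intro y hy
                refine Set.mem_sInter.2 (fun U hUF => ?_)
                rcases (hSmem U).1 hUF.1 with hc | ⟨_, _, habs, _⟩
                · exact absurd hc (hnotK U hUF)
                · exact habs δ (hall U hUF) hy
              obtain ⟨y, hy⟩ := nonempty_worldsOf (h4 hKcons δ)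
              have hyδ : y ∈ L.wS δ := mem_wS.2 ⟨hy.1, hy.2 hδod⟩
              have hbad : y ∈ C ∩ L.wS δ := ⟨hodδC hy, hyδ⟩
              rw [hδe] at hbad
              exact hbad
            obtain ⟨U₁, hU₁F, hU₁δ⟩ := hex2
            have hU₁Si : U₁ ∈ Si := by
              by_contra hU₁Si
              rcases (hSmem U₁).1 hU₁F.1 with hc | ⟨_, _, _, hthird⟩
              · exact absurd hc (hnotK U₁ hU₁F)
              · have heq := hthird δ (Set.not_nonempty_iff_eq_empty.1 hU₁δ) hU₁Si
                obtain ⟨z, hz⟩ := hKne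
                have hz2 : z ∈ L.worldsOf (od δ) ∩ U₁ := heq ▸ hz
                exact hU₁δ ⟨z, hz2.2, mem_wS.2 ⟨hz2.1.1, hz2.1.2 hδod⟩⟩
            apply hCSi
            rcases (hSimem U₁).1 hU₁Si with hc | ⟨_, hgensi, _⟩
            · exact absurd hc (hnotK U₁ hU₁F)
            · exact (hSimem C).2 (Or.inr ⟨hCne, (hCsub U₁ hU₁F).trans hgensi, habsC⟩)
          · exact fun φ hφ => hxK.2 (hodK hφ)
      have hCS : C ∈ S := (hSmem C).2 (Or.inr ⟨hCne, hCgens, habsC, hthirdC⟩)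
      exact ⟨C, hCS, hCα, fun V hV hVne => hCsub V ⟨hV, hVne⟩⟩
  have hLimSi : ∀ α, (∃ U ∈ Si, (U ∩ L.wS α).Nonempty) →
      ∃ U ∈ Si, (U ∩ L.wS α).Nonempty ∧ ∀ V ∈ Si, (V ∩ L.wS α).Nonempty → U ⊆ V := by
    intro α hex
    obtain ⟨U₀, hU₀Si, hU₀ne⟩ := hex
    by_cases hKα : (L.worldsOf K ∩ L.wS α).Nonempty
    · exact ⟨L.worldsOf K, hKSi, hKα, fun V hV _ => hWsub V (hSiS hV)⟩
    · set F : Set (Set (Set L.Sentence)) := {U | U ∈ Si ∧ (U ∩ L.wS α).Nonempty} with hFdef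
      set C : Set (Set L.Sentence) := ⋂₀ F with hCdef
      have hU₀F : U₀ ∈ F := ⟨hU₀Si, hU₀ne⟩
      have hnotK : ∀ U ∈ F, U ≠ L.worldsOf K := by
        intro U hUF hc
        exact hKα (hc ▸ hUF.2)
      have hCsub : ∀ U ∈ F, C ⊆ U := fun U hUF => Set.sInter_subset_of_mem hUF
      have hodC : L.worldsOf (od α) ⊆ C := by
        intro x hx
        refine Set.mem_sInter.2 (fun U hUF => ?_)
        rcases (hSimem U).1 hUF.1 with hc | ⟨_, _, habs⟩
        · exact absurd hc (hnotK U hUF)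
        · exact habs α hUF.2 hx
      have hodαne := hodne U₀ (hSiS hU₀Si) α hU₀ne
      have hCα : (C ∩ L.wS α).Nonempty := by
        obtain ⟨x, hx1, hx2⟩ := hodαne
        exact ⟨x, hodC hx1, hx2⟩
      have hWC : L.worldsOf K ⊆ C :=
        fun x hx => Set.mem_sInter.2 (fun U hUF => hWsub U (hSiS hUF.1) hx)
      have hCne : C.Nonempty := hKne.mono hWC
      have habsC : ∀ δ, (C ∩ L.wS δ).Nonempty → L.worldsOf (od δ) ⊆ C := by
        rintro δ ⟨x, hxC, hxδ⟩ y hy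
        refine Set.mem_sInter.2 (fun U hUF => ?_)
        rcases (hSimem U).1 hUF.1 with hc | ⟨_, _, habs⟩
        · exact absurd hc (hnotK U hUF)
        · exact habs δ ⟨x, hCsub U hUF hxC, hxδ⟩ hy
      have hCgensi : C ⊆ {w | ∃ δ, w ∈ L.worldsOf (od δ) ∧
          L.worldsOf (od δ) ⊆ L.wS δ} := by
        rcases (hSimem U₀).1 hU₀Si with hc | ⟨_, hgensi, _⟩
        · exact absurd hc (hnotK U₀ hU₀F)
        · exact (hCsub U₀ hU₀F).trans hgensi
      have hCSi : C ∈ Si := (hSimem C).2 (Or.inr ⟨hCne, hCgensi, habsC⟩)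
      exact ⟨C, hCSi, hCα, fun V hV hVne => hCsub V ⟨hV, hVne⟩⟩
  have hLayer : ∀ X ∈ Si, ∀ Y ∈ S, Y ∉ Si → X ⊆ Y := by
    intro X hX Y hY hYSi
    rcases (hSimem X).1 hX with hc | ⟨_, hgensi, _⟩
    · rw [hc]; exact hWsub Y hY
    · intro x hxX
      obtain ⟨α, hxα, hsubα⟩ := hgensi hxX
      by_cases hYα : (Y ∩ L.wS α).Nonempty
      · exact habsorb Y hY α hYα hxα
      · have hYne : Y ≠ L.worldsOf K := fun hc2 => hYSi (hc2 ▸ hKSi)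
        rcases (hSmem Y).1 hY with hc2 | ⟨_, _, _, hthird⟩
        · exact absurd hc2 hYne
        · exfalso
          have heq := hthird α (Set.not_nonempty_iff_eq_empty.1 hYα) hYSi
          obtain ⟨z, hz⟩ := hKne
          have hz2 : z ∈ L.worldsOf (od α) ∩ Y := heq ▸ hz
          exact hYα ⟨z, hz2.2, hsubα hz2.1⟩
  exact ⟨hworlds, hTot, fun U hU V hV => hTot U (hSiS hU) V (hSiS hV), hKS, hWsub,
    hKSi, fun U hU => hWsub U (hSiS hU), hLimS, hLimSi, hSiS, hLayer⟩
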